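/- Fix an integer m ≥ 1 and real constants D ≥ 1. For integers n ≥ 2 define T_n(m) = (1/2)·Γ(m+1)^{n−2}/Γ(2m+1)^{n−1} · ((2π)^n (n!)²/n^{2n})^m · (11/5)^n + Σ_{j=1}^{m−1} (1/j!)·((2π)^n (n!)²/n^{2n})^j · (Γ(2m+1−j)/Γ(2m+1))^{n−1} · (ζ(1/2 + m − j)/ζ(1/2 + m))^{2n}. Then for each fixed m ≥ 8, T_n(m) is nonincreasing as a function of n ≥ 2, because each summand is nonincreasing in n. -/

import Mathlib

open Real

/-- The Riemann zeta function on real arguments s > 1, given by its Dirichlet series. -/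
noncomputable def realZeta (s : ℝ) : ℝ := ∑' n : ℕ, ((n : ℝ) + 1) ^ (-s)

/-- The bound Tₙ(m) for |Q_f(z) − z^m| on the unit circle. -/
noncomputable def T (n m : ℕ) : ℝ :=
  1 / 2 * Real.Gamma ((m : ℝ) + 1) ^ (n - 2) / Real.Gamma (2 * (m : ℝ) + 1) ^ (n - 1) *
      ((2 * Real.pi) ^ n * ((n.factorial : ℝ)) ^ 2 / (n : ℝ) ^ (2 * n)) ^ m * (11 / 5) ^ n
  + ∑ j ∈ Finset.Icc 1 (m - 1),
      (1 / (j.factorial : ℝ)) *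
        ((2 * Real.pi) ^ n * ((n.factorial : ℝ)) ^ 2 / (n : ℝ) ^ (2 * n)) ^ j *
        (Real.Gamma (2 * (m : ℝ) + 1 - (j : ℝ)) / Real.Gamma (2 * (m : ℝ) + 1)) ^ (n - 1) *
        (realZeta (1 / 2 + (m : ℝ) - (j : ℝ)) / realZeta (1 / 2 + (m : ℝ))) ^ (2 * n)

section Aux

lemma summable_aux16 {s : ℝ} (hs : 1 < s) :
    Summable (fun n : ℕ => ((n : ℝ) + 1) ^ (-s)) := by
  have h : Summable (fun n : ℕ => (n : ℝ) ^ (-s)) :=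
    Real.summable_nat_rpow.mpr (by linarith)
  have h2 := (summable_nat_add_iff 1).mpr h
  refine h2.congr fun n => ?_
  push_cast
  ring_nf

lemma one_le_realZeta16 {s : ℝ} (hs : 1 < s) : 1 ≤ realZeta s := by
  have hsum := summable_aux16 hs
  have h0 : ((0:ℕ):ℝ) + 1 = 1 := by norm_num
  calc (1:ℝ) = (((0:ℕ):ℝ) + 1) ^ (-s) := by rw [h0, Real.one_rpow]
    _ ≤ _ := Summable.le_tsum hsum 0 (fun i _ => Real.rpow_nonneg (by positivity) _)

lemma realZeta_nonneg16 (s : ℝ) : 0 ≤ realZeta s :=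
  tsum_nonneg (fun n => Real.rpow_nonneg (by positivity) _)

lemma tele16 (N : ℕ) (hN : 1 ≤ N) :
    ((N:ℝ)+1) ^ (-(3/2) : ℝ) ≤ 2 / Real.sqrt N - 2 / Real.sqrt ((N:ℝ)+1) := by
  set a := Real.sqrt N with ha'
  set b := Real.sqrt ((N:ℝ)+1) with hb'
  have hNpos : (0:ℝ) < N := by exact_mod_cast hN
  have ha : 0 < a := Real.sqrt_pos.mpr hNpos
  have hb : 0 < b := Real.sqrt_pos.mpr (by linarith)
  have hab : a ≤ b := Real.sqrt_le_sqrt (by linarith)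
  have ha2 : a^2 = N := Real.sq_sqrt hNpos.le
  have hb2 : b^2 = (N:ℝ)+1 := Real.sq_sqrt (by linarith)
  have hrw : ((N:ℝ)+1) ^ (-(3/2) : ℝ) = (b^(3:ℕ))⁻¹ := by
    rw [← hb2, ← Real.rpow_natCast b 2, ← Real.rpow_mul hb.le]
    norm_num
  rw [hrw]
  have key : a * b * (a + b) ≤ 2 * b^3 := by nlinarith
  have hd : b - a = 1 / (a + b) := by
    rw [eq_div_iff (by positivity)]
    nlinarith
  have h2 : 2 / a - 2 / b = 2 / (a * b * (a+b)) := by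
    rw [div_sub_div _ _ ha.ne' hb.ne']
    rw [div_eq_div_iff (by positivity) (by positivity)]
    nlinarith [hd, mul_pos ha hb]
  rw [h2]
  rw [inv_eq_one_div, div_le_div_iff₀ (by positivity) (by positivity)]
  nlinarith [pow_pos hb 3]

lemma psum16 : ∀ N : ℕ, ∑ i ∈ Finset.range N, ((i:ℝ)+1) ^ (-(3/2):ℝ) ≤ 3 - 2 / Real.sqrt N := by
  intro N
  induction N with
  | zero => simp
  | succ k ih =>
    rw [Finset.sum_range_succ]
    rcases Nat.eq_zero_or_pos k with hk | hk
    · subst hk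
      norm_num [Real.one_rpow, Real.sqrt_one]
    · have ht := tele16 k hk
      push_cast
      linarith

lemma realZeta_le_three16 {s : ℝ} (hs : 3/2 ≤ s) : realZeta s ≤ 3 := by
  apply tsum_le_of_sum_range_le (fun n => Real.rpow_nonneg (by positivity) _)
  intro N
  calc ∑ i ∈ Finset.range N, ((i:ℝ)+1) ^ (-s)
      ≤ ∑ i ∈ Finset.range N, ((i:ℝ)+1) ^ (-(3/2):ℝ) := by
        apply Finset.sum_le_sum
        intro i _
        exact Real.rpow_le_rpow_of_exponent_le
          (by linarith [Nat.cast_nonneg (α := ℝ) i]) (by linarith)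
    _ ≤ 3 - 2 / Real.sqrt N := psum16 N
    _ ≤ 3 := by
        have : 0 ≤ 2 / Real.sqrt N := by positivity
        linarith

lemma gammaProd16 (m : ℕ) : ∀ j : ℕ,
    Real.Gamma ((m:ℝ)+1) * ((m:ℝ)+1)^j ≤ Real.Gamma ((m:ℝ)+1+j) := by
  intro j
  induction j with
  | zero => simp
  | succ k ih =>
    have hpos : (0:ℝ) < (m:ℝ)+1+k := by positivity
    have hG : Real.Gamma ((m:ℝ)+1+(k+1:ℕ)) = ((m:ℝ)+1+k) * Real.Gamma ((m:ℝ)+1+k) := by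
      rw [show ((m:ℝ)+1+(k+1:ℕ)) = ((m:ℝ)+1+k)+1 by push_cast; ring]
      exact Real.Gamma_add_one hpos.ne'
    rw [hG]
    have hGpos : 0 < Real.Gamma ((m:ℝ)+1+k) := Real.Gamma_pos_of_pos hpos
    calc Real.Gamma ((m:ℝ)+1) * ((m:ℝ)+1)^(k+1)
        = (Real.Gamma ((m:ℝ)+1) * ((m:ℝ)+1)^k) * ((m:ℝ)+1) := by ring
      _ ≤ Real.Gamma ((m:ℝ)+1+k) * ((m:ℝ)+1) := by
          apply mul_le_mul_of_nonneg_right ih (by positivity)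
      _ ≤ ((m:ℝ)+1+k) * Real.Gamma ((m:ℝ)+1+k) := by
          rw [mul_comm (Real.Gamma ((m:ℝ)+1+k))]
          apply mul_le_mul_of_nonneg_right (by linarith [Nat.cast_nonneg (α := ℝ) k]) hGpos.le

lemma gammaBound16 (m : ℕ) (hm : 8 ≤ m) : ∀ d : ℕ, d ≤ m - 2 →
    Real.Gamma (2*(m:ℝ) + 1 - ((d:ℝ)+1)) * (16 * 10^d) ≤ Real.Gamma (2*(m:ℝ)+1) := by
  have hm' : (8:ℝ) ≤ m := by exact_mod_cast hm
  intro d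
  induction d with
  | zero =>
    intro _
    have h0 : 2*(m:ℝ) + 1 - (((0:ℕ):ℝ)+1) = 2*m := by push_cast; ring
    rw [h0]
    have hpos : (0:ℝ) < 2*m := by linarith
    have hG : Real.Gamma (2*(m:ℝ)+1) = 2*(m:ℝ) * Real.Gamma (2*m) := Real.Gamma_add_one hpos.ne'
    rw [hG]
    have hGpos : 0 < Real.Gamma (2*(m:ℝ)) := Real.Gamma_pos_of_pos hpos
    calc Real.Gamma (2*(m:ℝ)) * (16 * 10^(0:ℕ)) = 16 * Real.Gamma (2*(m:ℝ)) := by ring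
      _ ≤ 2*(m:ℝ) * Real.Gamma (2*m) := mul_le_mul_of_nonneg_right (by linarith) hGpos.le
  | succ k ih =>
    intro hk
    have hk' : k ≤ m - 2 := by omega
    have hkR : (k:ℝ) ≤ (m:ℝ) - 3 := by
      have h3 : k + 3 ≤ m := by omega
      have := (Nat.cast_le (α := ℝ)).mpr h3
      push_cast at this; linarith
    have hx : 2*(m:ℝ) + 1 - (((k+1:ℕ):ℝ)+1) = (2*(m:ℝ) - (k:ℝ) - 1) := by push_cast; ring
    rw [hx]
    have hpos : (0:ℝ) < 2*(m:ℝ) - k - 1 := by linarith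
    have hten : (10:ℝ) ≤ 2*(m:ℝ) - k - 1 := by linarith
    have hG : Real.Gamma (2*(m:ℝ) + 1 - ((k:ℝ)+1)) = (2*(m:ℝ) - k - 1) * Real.Gamma (2*(m:ℝ) - k - 1) := by
      rw [show 2*(m:ℝ) + 1 - ((k:ℝ)+1) = (2*(m:ℝ) - k - 1) + 1 by ring]
      exact Real.Gamma_add_one hpos.ne'
    have hGpos : 0 < Real.Gamma (2*(m:ℝ) - k - 1) := Real.Gamma_pos_of_pos hpos
    calc Real.Gamma (2*(m:ℝ) - k - 1) * (16 * 10^(k+1))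
        = (Real.Gamma (2*(m:ℝ) - k - 1) * 10) * (16 * 10^k) := by ring
      _ ≤ (Real.Gamma (2*(m:ℝ) - k - 1) * (2*(m:ℝ) - k - 1)) * (16 * 10^k) := by
          apply mul_le_mul_of_nonneg_right _ (by positivity)
          exact mul_le_mul_of_nonneg_left hten hGpos.le
      _ = Real.Gamma (2*(m:ℝ) + 1 - ((k:ℝ)+1)) * (16 * 10^k) := by rw [hG]; ring
      _ ≤ Real.Gamma (2*(m:ℝ)+1) := ih hk'

lemma Ckey16 (n : ℕ) (hn : 2 ≤ n) :
    (2*Real.pi)^(n+1) * (((n+1).factorial : ℝ))^2 / (((n:ℝ)+1))^(2*(n+1)) ≤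
      63/40 * ((2*Real.pi)^n * ((n.factorial : ℝ))^2 / (n:ℝ)^(2*n)) := by
  have hnR : (2:ℝ) ≤ n := by exact_mod_cast hn
  have hn0 : (0:ℝ) < n := by linarith
  have hfac : (((n+1).factorial : ℝ)) = ((n:ℝ)+1) * (n.factorial : ℝ) := by
    rw [Nat.factorial_succ]; push_cast; ring
  have hbern : (2:ℝ) ≤ (1 + 1/(n:ℝ))^n := by
    have h := one_add_mul_le_pow (a := 1/(n:ℝ)) (le_trans (by norm_num : (-2:ℝ) ≤ 0) (by positivity)) n
    have : (n:ℝ) * (1/n) = 1 := by field_simp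
    nlinarith
  have hu : 4 * (n:ℝ)^(2*n) ≤ ((n:ℝ)+1)^(2*n) := by
    have h1 : (1 + 1/(n:ℝ)) = ((n:ℝ)+1)/n := by field_simp
    have h2 : (4:ℝ) ≤ (((n:ℝ)+1)/n)^(2*n) := by
      rw [two_mul, pow_add]
      rw [h1] at hbern
      nlinarith [pow_pos (show (0:ℝ) < ((n:ℝ)+1)/n by positivity) n]
    rw [div_pow] at h2
    have hv : (0:ℝ) < (n:ℝ)^(2*n) := by positivity
    rw [le_div_iff₀ hv] at h2
    linarith
  have hsplit : ((n:ℝ)+1)^(2*(n+1)) = ((n:ℝ)+1)^(2*n) * ((n:ℝ)+1)^2 := by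
    rw [show 2*(n+1) = 2*n+2 from by ring, pow_add]
  have hn1 : (0:ℝ) < (n:ℝ)+1 := by linarith
  have hLHS : (2*Real.pi)^(n+1) * (((n+1).factorial : ℝ))^2 / (((n:ℝ)+1))^(2*(n+1))
      = (2*Real.pi) * ((2*Real.pi)^n * ((n.factorial : ℝ))^2) / ((n:ℝ)+1)^(2*n) := by
    rw [hfac, hsplit, pow_succ]
    field_simp
  rw [hLHS]
  calc (2*Real.pi) * ((2*Real.pi)^n * ((n.factorial : ℝ))^2) / ((n:ℝ)+1)^(2*n)
      ≤ (2*Real.pi) * ((2*Real.pi)^n * ((n.factorial : ℝ))^2) / (4 * (n:ℝ)^(2*n)) := by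
        gcongr
    _ = (Real.pi/2) * ((2*Real.pi)^n * ((n.factorial : ℝ))^2 / (n:ℝ)^(2*n)) := by
        have : (n:ℝ)^(2*n) ≠ 0 := by positivity
        field_simp
        ring
    _ ≤ 63/40 * ((2*Real.pi)^n * ((n.factorial : ℝ))^2 / (n:ℝ)^(2*n)) := by
        apply mul_le_mul_of_nonneg_right _ (by positivity)
        linarith [Real.pi_lt_d2]

end Aux

/-- For each fixed m ≥ 8, Tₙ(m) is nonincreasing as a function of n ≥ 2. -/
theorem stmt_16 (m : ℕ) (hm : 8 ≤ m) :
    ∀ n : ℕ, 2 ≤ n → T (n + 1) m ≤ T n m := by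
  intro n hn
  obtain ⟨k, rfl⟩ : ∃ k, n = k + 2 := ⟨n - 2, by omega⟩
  have hmR : (8:ℝ) ≤ (m:ℝ) := by exact_mod_cast hm
  have hG1 : 0 < Real.Gamma ((m:ℝ)+1) := Real.Gamma_pos_of_pos (by linarith)
  have hG2 : 0 < Real.Gamma (2*(m:ℝ)+1) := Real.Gamma_pos_of_pos (by linarith)
  unfold T
  rw [show k+2+1-2 = k+1 from by omega, show k+2+1-1 = k+2 from by omega,
      show k+2-2 = k from by omega, show k+2-1 = k+1 from by omega,
      show ((k+2+1:ℕ):ℝ) = ((k+2:ℕ):ℝ)+1 from by push_cast; ring]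
  set G1 := Real.Gamma ((m:ℝ)+1) with hG1d
  set G2 := Real.Gamma (2*(m:ℝ)+1) with hG2d
  set c1 := (2*Real.pi)^(k+2) * (((k+2).factorial : ℝ))^2 / ((k+2:ℕ):ℝ)^(2*(k+2)) with hc1d
  set c2 := (2*Real.pi)^(k+2+1) * (((k+2+1).factorial : ℝ))^2 / (((k+2:ℕ):ℝ)+1)^(2*(k+2+1)) with hc2d
  have hc1 : 0 < c1 := by
    have : (0:ℝ) < ((k+2:ℕ):ℝ) := by positivity
    rw [hc1d]; positivity
  have hc2 : 0 ≤ c2 := by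
    have : (0:ℝ) < ((k+2:ℕ):ℝ)+1 := by positivity
    rw [hc2d]; positivity
  have hkey : c2 ≤ 63/40 * c1 := Ckey16 (k+2) (by omega)
  apply add_le_add
  · -- first term
    have key2 : G1 * ((63/40)^m * (11/5)) ≤ G2 := by
      have hP := gammaProd16 m m
      rw [show (m:ℝ)+1+(m:ℝ) = 2*(m:ℝ)+1 from by ring] at hP
      have b1 : (11:ℝ)/5 ≤ (40/7)^m :=
        le_trans (by norm_num) (le_self_pow₀ (by norm_num) (by omega))
      have a1 : ((63:ℝ)/40)^m * (11/5) ≤ ((m:ℝ)+1)^m := by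
        calc ((63:ℝ)/40)^m * (11/5) ≤ (63/40)^m * (40/7)^m :=
              mul_le_mul_of_nonneg_left b1 (by positivity)
          _ = 9^m := by rw [← mul_pow]; norm_num
          _ ≤ ((m:ℝ)+1)^m := pow_le_pow_left₀ (by norm_num) (by linarith) m
      calc G1 * ((63/40)^m * (11/5)) ≤ G1 * ((m:ℝ)+1)^m :=
            mul_le_mul_of_nonneg_left a1 hG1.le
        _ ≤ G2 := hP
    have hL : 1/2 * G1^(k+1) / G2^(k+2) * c2^m * (11/5:ℝ)^(k+2+1)
        = (1/2 * G1^(k+1) * c2^m * (11/5:ℝ)^(k+2+1)) / G2^(k+2) := by ring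
    have hR : 1/2 * G1^k / G2^(k+1) * c1^m * (11/5:ℝ)^(k+2)
        = (1/2 * G1^k * c1^m * (11/5:ℝ)^(k+2)) / G2^(k+1) := by ring
    rw [hL, hR, div_le_div_iff₀ (by positivity) (by positivity)]
    calc 1/2 * G1^(k+1) * c2^m * (11/5:ℝ)^(k+2+1) * G2^(k+1)
        ≤ 1/2 * G1^(k+1) * (63/40*c1)^m * (11/5:ℝ)^(k+2+1) * G2^(k+1) := by
          gcongr
      _ = (1/2 * G1^k * c1^m * (11/5:ℝ)^(k+2) * G2^(k+1)) * (G1 * ((63/40)^m * (11/5))) := by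
          rw [mul_pow]; ring
      _ ≤ (1/2 * G1^k * c1^m * (11/5:ℝ)^(k+2) * G2^(k+1)) * G2 := by
          apply mul_le_mul_of_nonneg_left key2 (by positivity)
      _ = 1/2 * G1^k * c1^m * (11/5:ℝ)^(k+2) * G2^(k+2) := by ring
  · -- sum term
    apply Finset.sum_le_sum
    intro j hj
    rw [Finset.mem_Icc] at hj
    obtain ⟨hj1, hj2⟩ := hj
    obtain ⟨d, rfl⟩ : ∃ d, j = d + 1 := ⟨j - 1, by omega⟩
    have hdm : (d:ℝ) + 2 ≤ (m:ℝ) := by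
      have h3 : d + 2 ≤ m := by omega
      exact_mod_cast h3
    rw [show (((d+1:ℕ)):ℝ) = (d:ℝ)+1 from by push_cast; ring]
    set r := Real.Gamma (2*(m:ℝ)+1 - ((d:ℝ)+1)) / G2 with hrd
    set z := realZeta (1/2 + (m:ℝ) - ((d:ℝ)+1)) / realZeta (1/2 + (m:ℝ)) with hzd
    have hgpos : 0 < Real.Gamma (2*(m:ℝ)+1 - ((d:ℝ)+1)) :=
      Real.Gamma_pos_of_pos (by linarith)
    have hr0 : 0 ≤ r := by rw [hrd]; positivity
    have hr1 : r * (16 * 10^d) ≤ 1 := by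
      rw [hrd, div_mul_eq_mul_div, div_le_one hG2]
      exact gammaBound16 m hm d (by omega)
    have hzb1 : 1 ≤ realZeta (1/2 + (m:ℝ)) := one_le_realZeta16 (by linarith)
    have hza3 : realZeta (1/2 + (m:ℝ) - ((d:ℝ)+1)) ≤ 3 := realZeta_le_three16 (by linarith)
    have hza0 : 0 ≤ realZeta (1/2 + (m:ℝ) - ((d:ℝ)+1)) := realZeta_nonneg16 _
    have hz3 : z ≤ 3 := by
      rw [hzd]
      calc realZeta (1/2 + (m:ℝ) - ((d:ℝ)+1)) / realZeta (1/2 + (m:ℝ))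
          ≤ realZeta (1/2 + (m:ℝ) - ((d:ℝ)+1)) := div_le_self hza0 hzb1
        _ ≤ 3 := hza3
    have hz0 : 0 ≤ z := by
      rw [hzd]; exact div_nonneg hza0 (by linarith)
    have hfinal : (63/40:ℝ)^(d+1) * (r * 9) ≤ 1 := by
      have hp : ((63:ℝ)/40)^d ≤ 10^d := pow_le_pow_left₀ (by norm_num) (by norm_num) d
      have h10 : (0:ℝ) < 10^d := by positivity
      have h9 : ((63:ℝ)/40)^(d+1) * 9 ≤ 16 * 10^d := by
        calc ((63:ℝ)/40)^(d+1) * 9 = (567/40) * (63/40)^d := by ring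
          _ ≤ (567/40) * 10^d := by nlinarith
          _ ≤ 16 * 10^d := by nlinarith
      calc (63/40:ℝ)^(d+1) * (r * 9) = r * ((63/40)^(d+1) * 9) := by ring
        _ ≤ r * (16 * 10^d) := mul_le_mul_of_nonneg_left h9 hr0
        _ ≤ 1 := hr1
    have hfj : (0:ℝ) < ((d+1).factorial : ℝ) := by
      exact_mod_cast Nat.factorial_pos (d+1)
    calc 1/((d+1).factorial : ℝ) * c2^(d+1) * r^(k+2) * z^(2*(k+2+1))
        = (1/((d+1).factorial : ℝ) * c2^(d+1)) * (r^(k+1) * r) * (z^(2*(k+2)) * z^2) := by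
          rw [show 2*(k+2+1) = 2*(k+2)+2 from by ring, pow_add,
              show k+2 = (k+1)+1 from rfl, pow_succ]
          ring
      _ ≤ (1/((d+1).factorial : ℝ) * (63/40*c1)^(d+1)) * (r^(k+1) * r) * (z^(2*(k+2)) * 3^2) := by
          gcongr
      _ = (1/((d+1).factorial : ℝ) * c1^(d+1) * r^(k+1) * z^(2*(k+2))) * ((63/40:ℝ)^(d+1) * (r * 9)) := by
          rw [mul_pow]; ring
      _ ≤ (1/((d+1).factorial : ℝ) * c1^(d+1) * r^(k+1) * z^(2*(k+2))) * 1 := by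
          apply mul_le_mul_of_nonneg_left hfinal
          apply mul_nonneg (mul_nonneg (mul_nonneg (by positivity) (by positivity)) (pow_nonneg hr0 _)) (pow_nonneg hz0 _)
      _ = 1/((d+1).factorial : ℝ) * c1^(d+1) * r^(k+1) * z^(2*(k+2)) := by ring
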